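/- Let n ≥ 2 and τ ∈ [(n-2)·π/2, n·π/2). Then the set Γ^τ = {λ ∈ ℝ^n : Σ_{i=1}^n arctan(λ_i) > τ} is a convex subset of ℝ^n. -/

import Mathlib

open Real Finset Topology Filter

lemma my_arctan_add_le {a b : ℝ} (ha : 0 ≤ a) (hb : 0 ≤ b) :
    arctan (a + b) ≤ arctan a + arctan b := by
  rcases lt_or_ge (a * b) 1 with h | h
  · rw [arctan_add h]
    apply arctan_strictMono.monotone
    rw [le_div_iff₀ (by nlinarith : (0:ℝ) < 1 - a * b)]
    nlinarith [mul_nonneg (add_nonneg ha hb) (mul_nonneg ha hb)]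
  · have ha' : 0 < a := by nlinarith
    have hb' : 0 < b := by nlinarith
    have h1 : a⁻¹ ≤ b := by
      rw [inv_le_iff_one_le_mul₀ ha']; nlinarith
    have h2 : π / 2 - arctan a ≤ arctan b := by
      rw [← arctan_inv_of_pos ha']
      exact arctan_strictMono.monotone h1
    have := arctan_lt_pi_div_two (a + b)
    linarith

lemma my_arctan_sum_le {ι : Type*} (s : Finset ι) (u : ι → ℝ) (hu : ∀ i ∈ s, 0 ≤ u i) :
    arctan (∑ i ∈ s, u i) ≤ ∑ i ∈ s, arctan (u i) := by
  induction s using Finset.cons_induction with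
  | empty => simp
  | cons i s his ih =>
    rw [Finset.sum_cons, Finset.sum_cons]
    calc arctan (u i + ∑ j ∈ s, u j) ≤ arctan (u i) + arctan (∑ j ∈ s, u j) :=
          my_arctan_add_le (hu i (by simp)) (Finset.sum_nonneg fun j hj => hu j (by simp [hj]))
      _ ≤ _ := by
          gcongr
          exact ih fun j hj => hu j (by simp [hj])

open Real Finset Topology Filter

lemma my_pair_pos {n : ℕ} (hn : 2 ≤ n) (x : Fin n → ℝ)
    (hsum : ((n : ℝ) - 2) * π / 2 < ∑ i, arctan (x i)) {i j : Fin n} (hij : i ≠ j) :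
    0 < arctan (x i) + arctan (x j) := by
  have hsub : ({i, j} : Finset (Fin n)) ⊆ univ := Finset.subset_univ _
  have hsplit : ∑ k ∈ (univ \ {i, j}), arctan (x k) + ∑ k ∈ ({i, j} : Finset (Fin n)), arctan (x k)
      = ∑ k, arctan (x k) := Finset.sum_sdiff hsub
  have hpair : ∑ k ∈ ({i, j} : Finset (Fin n)), arctan (x k) = arctan (x i) + arctan (x j) :=
    Finset.sum_pair hij
  have hcard : ((univ \ {i, j} : Finset (Fin n)).card : ℝ) = (n : ℝ) - 2 := by
    rw [Finset.card_sdiff_of_subset hsub, Finset.card_univ, Fintype.card_fin, Finset.card_pair hij]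
    push_cast [Nat.cast_sub hn]
    ring
  have hbound : ∑ k ∈ (univ \ {i, j}), arctan (x k) ≤ ((n : ℝ) - 2) * (π / 2) := by
    rw [← hcard]
    calc ∑ k ∈ (univ \ {i, j}), arctan (x k)
        ≤ ∑ k ∈ (univ \ {i, j}), π / 2 :=
          Finset.sum_le_sum fun k _ => (arctan_lt_pi_div_two (x k)).le
      _ = _ := by rw [Finset.sum_const, nsmul_eq_mul]
  have : ((n : ℝ) - 2) * π / 2 = ((n : ℝ) - 2) * (π / 2) := by ring
  linarith [hsplit, hpair]

lemma my_recip_bound {n : ℕ} (hn : 2 ≤ n) (x : Fin n → ℝ) (j : Fin n) (hxj : x j < 0)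
    (hpos : ∀ i, i ≠ j → 0 < x i)
    (hsum : ((n : ℝ) - 2) * π / 2 < ∑ i, arctan (x i)) :
    ∑ i ∈ univ.erase j, (x i)⁻¹ < (-(x j))⁻¹ := by
  set m : ℝ := -(x j) with hm
  have hm0 : 0 < m := by simp [hm]; linarith
  have hsplit : arctan (x j) + ∑ i ∈ univ.erase j, arctan (x i) = ∑ i, arctan (x i) :=
    Finset.add_sum_erase _ (fun i => arctan (x i)) (Finset.mem_univ j)
  have hxjm : arctan (x j) = -arctan m := by rw [hm, arctan_neg, neg_neg]
  have hcard : ((univ.erase j : Finset (Fin n)).card : ℝ) = (n : ℝ) - 1 := by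
    rw [Finset.card_erase_of_mem (Finset.mem_univ j), Finset.card_univ, Fintype.card_fin]
    push_cast [Nat.cast_sub (by omega : 1 ≤ n)]
    ring
  have hinv : ∀ i ∈ univ.erase j, arctan (x i) = π / 2 - arctan (x i)⁻¹ := by
    intro i hi
    have := arctan_inv_of_pos (hpos i (Finset.ne_of_mem_erase hi))
    linarith
  have hs2 : ∑ i ∈ univ.erase j, arctan (x i)
      = ((n : ℝ) - 1) * (π / 2) - ∑ i ∈ univ.erase j, arctan (x i)⁻¹ := by
    rw [Finset.sum_congr rfl hinv, Finset.sum_sub_distrib, Finset.sum_const, nsmul_eq_mul, hcard]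
  have hlt : ∑ i ∈ univ.erase j, arctan (x i)⁻¹ < arctan m⁻¹ := by
    rw [arctan_inv_of_pos hm0]
    linarith
  have hsub : arctan (∑ i ∈ univ.erase j, (x i)⁻¹) ≤ ∑ i ∈ univ.erase j, arctan (x i)⁻¹ :=
    my_arctan_sum_le _ _ fun i hi => (inv_pos.mpr (hpos i (Finset.ne_of_mem_erase hi))).le
  exact arctan_strictMono.lt_iff_lt.mp (lt_of_le_of_lt hsub hlt)

lemma my_keyQ {n : ℕ} (hn : 2 ≤ n) (x c : Fin n → ℝ)
    (hsum : ((n : ℝ) - 2) * π / 2 < ∑ i, arctan (x i))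
    (hcne : ∃ i, c i ≠ 0) (horth : ∑ i, c i = 0) :
    0 < ∑ i, x i * c i ^ 2 := by
  have hgt : ∀ i j : Fin n, i ≠ j → -(x j) < x i := by
    intro i j hij
    have h := my_pair_pos hn x hsum hij
    have : arctan (-(x j)) < arctan (x i) := by rw [arctan_neg]; linarith
    exact arctan_strictMono.lt_iff_lt.mp this
  by_cases hallpos : ∀ i, 0 < x i
  · obtain ⟨i₀, hi₀⟩ := hcne
    refine Finset.sum_pos' (fun i _ => mul_nonneg (hallpos i).le (sq_nonneg _)) ⟨i₀, mem_univ _, ?_⟩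
    exact mul_pos (hallpos i₀) (lt_of_le_of_ne (sq_nonneg _) (Ne.symm (pow_ne_zero 2 hi₀)))
  · push_neg at hallpos
    obtain ⟨j, hxj⟩ := hallpos
    have hposi : ∀ i, i ≠ j → 0 < x i := fun i hij =>
      lt_of_le_of_lt (by linarith : (0:ℝ) ≤ -(x j)) (hgt i j hij)
    have hsplit : ∑ i, x i * c i ^ 2 = x j * c j ^ 2 + ∑ i ∈ univ.erase j, x i * c i ^ 2 :=
      (Finset.add_sum_erase _ (fun i => x i * c i ^ 2) (mem_univ j)).symm
    have hcj : c j + ∑ i ∈ univ.erase j, c i = 0 := by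
      rw [Finset.add_sum_erase _ c (mem_univ j)]; exact horth
    have hex : ∃ i ∈ univ.erase j, c i ≠ 0 := by
      by_contra hall
      push_neg at hall
      have hz : ∑ i ∈ univ.erase j, c i = 0 := Finset.sum_eq_zero hall
      have hcjz : c j = 0 := by linarith [hcj, hz]
      obtain ⟨i₀, hi₀⟩ := hcne
      rcases eq_or_ne i₀ j with rfl | h
      · exact hi₀ hcjz
      · exact hi₀ (hall i₀ (Finset.mem_erase.mpr ⟨h, mem_univ _⟩))
    have hS : 0 < ∑ i ∈ univ.erase j, x i * c i ^ 2 := by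
      obtain ⟨i₀, hi₀m, hi₀⟩ := hex
      refine Finset.sum_pos' (fun i hi => mul_nonneg (hposi i (Finset.ne_of_mem_erase hi)).le (sq_nonneg _)) ⟨i₀, hi₀m, ?_⟩
      exact mul_pos (hposi i₀ (Finset.ne_of_mem_erase hi₀m))
        (lt_of_le_of_ne (sq_nonneg _) (Ne.symm (pow_ne_zero 2 hi₀)))
    rcases hxj.lt_or_eq with hxneg | hx0
    on_goal 2 => rw [hsplit, hx0]; simpa using hS
    · set S := ∑ i ∈ univ.erase j, x i * c i ^ 2 with hSdef
      set m : ℝ := -(x j) with hm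
      have hm0 : 0 < m := by rw [hm]; linarith
      have hCS : (∑ i ∈ univ.erase j, c i) ^ 2 ≤ S * ∑ i ∈ univ.erase j, (x i)⁻¹ := by
        have h := Finset.sum_mul_sq_le_sq_mul_sq (univ.erase j)
          (fun i => Real.sqrt (x i) * c i) (fun i => (Real.sqrt (x i))⁻¹)
        have e1 : ∑ i ∈ univ.erase j, (Real.sqrt (x i) * c i) * (Real.sqrt (x i))⁻¹
            = ∑ i ∈ univ.erase j, c i := by
          refine Finset.sum_congr rfl fun i hi => ?_
          have hs : Real.sqrt (x i) ≠ 0 :=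
            (Real.sqrt_pos.mpr (hposi i (Finset.ne_of_mem_erase hi))).ne'
          field_simp
        have e2 : ∑ i ∈ univ.erase j, (Real.sqrt (x i) * c i) ^ 2 = S := by
          refine Finset.sum_congr rfl fun i hi => ?_
          rw [mul_pow, Real.sq_sqrt (hposi i (Finset.ne_of_mem_erase hi)).le]
        have e3 : ∑ i ∈ univ.erase j, ((Real.sqrt (x i))⁻¹) ^ 2 = ∑ i ∈ univ.erase j, (x i)⁻¹ := by
          refine Finset.sum_congr rfl fun i hi => ?_
          rw [inv_pow, Real.sq_sqrt (hposi i (Finset.ne_of_mem_erase hi)).le]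
        rw [e1, e2, e3] at h
        exact h
      have hrecip := my_recip_bound hn x j hxneg hposi hsum
      have hc2 : c j ^ 2 < S * m⁻¹ := by
        have hcjeq : c j = -∑ i ∈ univ.erase j, c i := by linarith
        have h1 : c j ^ 2 = (∑ i ∈ univ.erase j, c i) ^ 2 := by rw [hcjeq]; ring
        have h2 : S * ∑ i ∈ univ.erase j, (x i)⁻¹ < S * m⁻¹ :=
          mul_lt_mul_of_pos_left (by rw [hm]; exact hrecip) hS
        linarith
      have hmc : m * c j ^ 2 < S := by
        have := mul_lt_mul_of_pos_left hc2 hm0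
        rwa [mul_comm S m⁻¹, ← mul_assoc, mul_inv_cancel₀ hm0.ne', one_mul] at this
      rw [hsplit]
      have hxjm : x j = -m := by rw [hm, neg_neg]
      rw [hxjm]
      linarith

lemma my_step_down {f f' : ℝ → ℝ} {a b D : ℝ} (hab : a < b)
    (hf : ∀ t ∈ Set.Icc a b, HasDerivAt f (f' t) t)
    (h'a : f' a = 0) (h'' : HasDerivAt f' D a) (hD : D < 0) :
    ∃ t ∈ Set.Icc a b, f t < f a := by
  have hslope : Filter.Tendsto (slope f' a) (𝓝[≠] a) (𝓝 D) :=
    hasDerivAt_iff_tendsto_slope.mp h''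
  have hle : 𝓝[>] a ≤ 𝓝[≠] a :=
    nhdsWithin_mono _ (fun t ht => ne_of_gt ht)
  have h1 : ∀ᶠ t in 𝓝[>] a, slope f' a t < 0 :=
    (hslope.mono_left hle).eventually_lt_const hD
  have h2 : ∀ᶠ t in 𝓝[>] a, f' t < 0 := by
    filter_upwards [h1, self_mem_nhdsWithin] with t hs ht
    have hta : (0:ℝ) < t - a := sub_pos.mpr ht
    rw [slope_def_field, div_lt_iff₀ hta, zero_mul, h'a, sub_zero] at hs
    exact hs
  obtain ⟨u, hu, hsub⟩ := mem_nhdsGT_iff_exists_Ioo_subset.mp h2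
  have hu' : a < u := hu
  set b' : ℝ := min b ((a + u) / 2) with hb'
  have hab' : a < b' := lt_min hab (by linarith)
  have hb'u : b' < u := lt_of_le_of_lt (min_le_right _ _) (by linarith)
  have hb'b : b' ≤ b := min_le_left _ _
  have hIcc : Set.Icc a b' ⊆ Set.Icc a b := Set.Icc_subset_Icc le_rfl hb'b
  have hanti : StrictAntiOn f (Set.Icc a b') := by
    apply strictAntiOn_of_deriv_neg (convex_Icc a b')
    · exact fun t ht => (hf t (hIcc ht)).continuousAt.continuousWithinAt
    · intro t ht
      rw [interior_Icc] at ht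
      rw [(hf t (hIcc ⟨ht.1.le, ht.2.le⟩)).deriv]
      exact hsub ⟨ht.1, lt_of_lt_of_le ht.2 (by linarith [min_le_right b ((a+u)/2)] : b' ≤ u)⟩
  exact ⟨b', ⟨hab'.le, hb'b⟩,
    hanti ⟨le_rfl, hab'.le⟩ ⟨hab'.le, le_rfl⟩ hab'⟩

lemma my_seg {n : ℕ} (hn : 2 ≤ n) (p q : Fin n → ℝ) (τ : ℝ)
    (hc : ((n : ℝ) - 2) * π / 2 < τ)
    (h0 : τ < ∑ i, arctan (p i)) (h1 : τ < ∑ i, arctan (p i + q i)) :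
    ∀ t ∈ Set.Icc (0:ℝ) 1, τ < ∑ i, arctan (p i + t * q i) := by
  by_contra hbad
  push_neg at hbad
  obtain ⟨t₀, ht₀, hle⟩ := hbad
  rcases eq_or_ne q 0 with rfl | hq
  · simp only [Pi.zero_apply, mul_zero, add_zero] at hle
    linarith
  have hnpos : (0:ℕ) < n := by omega
  have hτpos : 0 < τ := by
    have h2n : (0:ℝ) ≤ (n:ℝ) - 2 := by
      have : (2:ℝ) ≤ (n:ℝ) := by exact_mod_cast hn
      linarith
    nlinarith [pi_pos]
  set F : ℝ → ℝ → ℝ := fun r t => ∑ i, arctan (p i + t * q i + r) with hF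
  have contF : Continuous (fun rt : ℝ × ℝ => F rt.1 rt.2) := by
    apply continuous_finset_sum
    intro i _
    exact Real.continuous_arctan.comp (by fun_prop)
  have hmono : ∀ t r r', r ≤ r' → F r t ≤ F r' t := by
    intro t r r' hrr
    exact Finset.sum_le_sum fun i _ => arctan_strictMono.monotone (by linarith)
  -- the bound C
  set C : ℝ := ∑ i, (|p i| + |q i|) with hC
  have hC0 : 0 ≤ C := Finset.sum_nonneg fun i _ => by positivity
  have hCb : ∀ t ∈ Set.Icc (0:ℝ) 1, ∀ i, -C ≤ p i + t * q i := by
    intro t ht i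
    have h1' : |p i + t * q i| ≤ |p i| + |q i| := by
      calc |p i + t * q i| ≤ |p i| + |t * q i| := abs_add_le _ _
        _ ≤ |p i| + |q i| := by
            rw [abs_mul]
            have : |t| ≤ 1 := abs_le.mpr ⟨by linarith [ht.1], ht.2⟩
            nlinarith [abs_nonneg (q i), abs_nonneg t]
    have h2' : |p i| + |q i| ≤ C :=
      Finset.single_le_sum (f := fun i => |p i| + |q i|) (fun i _ => by positivity) (mem_univ i)
    have := neg_abs_le (p i + t * q i)
    linarith
  -- τ < n * (π/2)
  have hτn : τ < (n:ℝ) * (π / 2) := by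
    have : ∑ i, arctan (p i) < ∑ i : Fin n, π / 2 :=
      Finset.sum_lt_sum_of_nonempty (univ_nonempty_iff.mpr ⟨⟨0, hnpos⟩⟩)
        (fun i _ => arctan_lt_pi_div_two _)
    rw [Finset.sum_const, Finset.card_univ, Fintype.card_fin, nsmul_eq_mul] at this
    linarith
  set β : ℝ := (τ / n + π / 2) / 2 with hβ
  have hβ1 : τ / n < β := by
    rw [hβ]
    have : τ / n < π / 2 := by
      rw [div_lt_iff₀ (by exact_mod_cast hnpos : (0:ℝ) < n)]
      calc τ < (n:ℝ) * (π/2) := hτn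
        _ = π / 2 * n := by ring
    linarith
  have hβ2 : β < π / 2 := by
    rw [hβ]
    have : τ / n < π / 2 := by
      rw [div_lt_iff₀ (by exact_mod_cast hnpos : (0:ℝ) < n)]
      calc τ < (n:ℝ) * (π/2) := hτn
        _ = π / 2 * n := by ring
    linarith
  have hβ0 : 0 < β := by
    rw [hβ]
    have : 0 < τ / n := div_pos hτpos (by exact_mod_cast hnpos)
    linarith [pi_pos]
  set R : ℝ := C + tan β with hR
  have htanβ : 0 < tan β := tan_pos_of_pos_of_lt_pi_div_two hβ0 hβ2
  have hR0 : 0 ≤ R := by rw [hR]; linarith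
  have hRbig : ∀ t ∈ Set.Icc (0:ℝ) 1, τ < F R t := by
    intro t ht
    have hterm : ∀ i : Fin n, β ≤ arctan (p i + t * q i + R) := by
      intro i
      have : tan β ≤ p i + t * q i + R := by
        have := hCb t ht i
        rw [hR]; linarith
      calc β = arctan (tan β) := (arctan_tan (by linarith [pi_pos]) hβ2).symm
        _ ≤ arctan (p i + t * q i + R) := arctan_strictMono.monotone this
    calc τ = (n:ℝ) * (τ / n) := by
          field_simp
      _ < (n:ℝ) * β := by
          apply mul_lt_mul_of_pos_left hβ1 (by exact_mod_cast hnpos)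
      _ = ∑ _i : Fin n, β := by
          rw [Finset.sum_const, Finset.card_univ, Fintype.card_fin, nsmul_eq_mul]
      _ ≤ F R t := Finset.sum_le_sum fun i _ => hterm i
  -- the compact set K
  set K : Set (ℝ × ℝ) := (Set.Icc (0:ℝ) R ×ˢ Set.Icc (0:ℝ) 1) ∩ {rt | F rt.1 rt.2 ≤ τ} with hK
  have hKcomp : IsCompact K :=
    (isCompact_Icc.prod isCompact_Icc).inter_right (isClosed_le contF continuous_const)
  have hKne : K.Nonempty := by
    refine ⟨(0, t₀), ⟨⟨le_rfl, hR0⟩, ht₀⟩, ?_⟩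
    simp only [Set.mem_setOf_eq, hF, add_zero]
    exact hle
  obtain ⟨⟨rs, t₁⟩, hmem, hmax⟩ :=
    hKcomp.exists_isMaxOn hKne continuous_fst.continuousOn
  have hrs0 : 0 ≤ rs := hmem.1.1.1
  have hrsR : rs < R := by
    rcases lt_or_eq_of_le hmem.1.1.2 with h | h
    · exact h
    · exfalso
      have := hmem.2
      rw [Set.mem_setOf_eq, h] at this
      exact absurd this (not_le.mpr (hRbig t₁ hmem.1.2))
  -- min of F rs on [0,1]
  have hgcont : ContinuousOn (fun t => F rs t) (Set.Icc (0:ℝ) 1) :=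
    (contF.comp (continuous_const.prodMk continuous_id)).continuousOn
  obtain ⟨t₂, ht₂mem, ht₂min⟩ :=
    isCompact_Icc.exists_isMinOn ⟨0, by norm_num⟩ hgcont
  have hFt₂le : F rs t₂ ≤ τ := le_trans (ht₂min hmem.1.2) hmem.2
  have hFt₂ : F rs t₂ = τ := by
    rcases lt_or_eq_of_le hFt₂le with hlt | heq
    · exfalso
      have hcont : Filter.Tendsto (fun r => F r t₂) (𝓝 rs) (𝓝 (F rs t₂)) :=
        (contF.comp (continuous_id.prodMk continuous_const)).tendsto rs
      have hev1 : ∀ᶠ r in 𝓝 rs, F r t₂ < τ := hcont.eventually_lt_const hlt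
      have hev2 : ∀ᶠ r in 𝓝 rs, r < R := eventually_lt_nhds hrsR
      have hev : ∀ᶠ r in 𝓝[>] rs, F r t₂ < τ ∧ r < R :=
        ((hev1.and hev2).filter_mono nhdsWithin_le_nhds)
      obtain ⟨r', hr'⟩ := (hev.and self_mem_nhdsWithin).exists
      have hr'K : (r', t₂) ∈ K :=
        ⟨⟨⟨le_trans hrs0 (le_of_lt hr'.2), hr'.1.2.le⟩, ht₂mem⟩, hr'.1.1.le⟩
      have := hmax hr'K
      simp only [Set.mem_setOf_eq] at this
      exact absurd this (not_le.mpr hr'.2)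
    · exact heq
  have hF00 : F 0 0 = ∑ i, arctan (p i) := by
    simp [hF]
  have hF01 : F 0 1 = ∑ i, arctan (p i + q i) := by
    simp [hF]
  have ht₂0 : t₂ ≠ 0 := by
    intro h
    have : τ < F rs 0 := lt_of_lt_of_le (by rw [← hF00] at h0; exact h0) (hmono 0 0 rs hrs0)
    rw [← h, hFt₂] at this
    exact lt_irrefl _ this
  have ht₂1 : t₂ ≠ 1 := by
    intro h
    have : τ < F rs 1 := lt_of_lt_of_le (by rw [← hF01] at h1; exact h1) (hmono 1 0 rs hrs0)
    rw [← h, hFt₂] at this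
    exact lt_irrefl _ this
  have ht₂Ioo : t₂ ∈ Set.Ioo (0:ℝ) 1 :=
    ⟨lt_of_le_of_ne ht₂mem.1 (Ne.symm ht₂0), lt_of_le_of_ne ht₂mem.2 ht₂1⟩
  -- calculus at t₂
  set x : Fin n → ℝ := fun i => p i + t₂ * q i + rs with hx
  set f' : ℝ → ℝ := fun t => ∑ i, q i * (1 + (p i + t * q i + rs) ^ 2)⁻¹ with hf'
  have hu : ∀ (i : Fin n) (t : ℝ), HasDerivAt (fun s => p i + s * q i + rs) (q i) t := by
    intro i t
    simpa using (((hasDerivAt_id t).mul_const (q i)).const_add (p i)).add_const rs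
  have hder : ∀ t, HasDerivAt (fun s => F rs s) (f' t) t := by
    intro t
    have h := HasDerivAt.fun_sum (u := univ)
      (fun i _ => ((hu i t).arctan : HasDerivAt (fun s => arctan (p i + s * q i + rs))
        (1 / (1 + (p i + t * q i + rs) ^ 2) * q i) t))
    have e : ∑ i, 1 / (1 + (p i + t * q i + rs) ^ 2) * q i = f' t := by
      refine Finset.sum_congr rfl fun i _ => ?_
      rw [one_div]; ring
    rw [e] at h
    exact h
  have hlocmin : IsLocalMin (fun t => F rs t) t₂ :=
    ht₂min.isLocalMin (Icc_mem_nhds ht₂Ioo.1 ht₂Ioo.2)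
  have hf'0 : f' t₂ = 0 := by
    have h1' := hlocmin.deriv_eq_zero
    rw [(hder t₂).deriv] at h1'
    exact h1'
  set c : Fin n → ℝ := fun i => q i * (1 + x i ^ 2)⁻¹ with hcdef
  have hw0 : ∀ i : Fin n, (1 + x i ^ 2) ≠ 0 := fun i => by positivity
  have horth : ∑ i, c i = 0 := hf'0
  have hcne : ∃ i, c i ≠ 0 := by
    obtain ⟨i, hi⟩ := Function.ne_iff.mp hq
    exact ⟨i, mul_ne_zero hi (inv_ne_zero (hw0 i))⟩
  have hxsum : ((n:ℝ) - 2) * π / 2 < ∑ i, arctan (x i) := by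
    have : ∑ i, arctan (x i) = F rs t₂ := rfl
    rw [this, hFt₂]
    exact hc
  have hQ : 0 < ∑ i, x i * c i ^ 2 := my_keyQ hn x c hxsum hcne horth
  -- second derivative of f' at t₂
  set D : ℝ := ∑ i, q i * (-(2 * (p i + t₂ * q i + rs) ^ 1 * q i) / ((1 + (p i + t₂ * q i + rs) ^ 2) ^ 2)) with hD
  have hder2 : HasDerivAt f' D t₂ := by
    apply HasDerivAt.fun_sum
    intro i _
    have hwder : HasDerivAt (fun s => 1 + (p i + s * q i + rs) ^ 2)
        (2 * (p i + t₂ * q i + rs) ^ 1 * q i) t₂ := by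
      simpa using (((hu i t₂).pow 2).const_add 1)
    exact (hwder.inv (hw0 i)).const_mul (q i)
  have hDneg : D < 0 := by
    have e : D = -2 * ∑ i, x i * c i ^ 2 := by
      rw [hD, Finset.mul_sum]
      refine Finset.sum_congr rfl fun i _ => ?_
      have hwi := hw0 i
      rw [hcdef]
      field_simp
      ring
    rw [e]
    linarith
  obtain ⟨t₃, ht₃mem, ht₃lt⟩ :=
    my_step_down ht₂Ioo.2 (fun t _ => hder t) hf'0 hder2 hDneg
  have : F rs t₂ ≤ F rs t₃ :=
    ht₂min (Set.Icc_subset_Icc ht₂Ioo.1.le le_rfl ht₃mem)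
  exact absurd ht₃lt (not_lt.mpr this)

theorem stmt_2 (n : ℕ) (hn : 2 ≤ n) (τ : ℝ)
    (hτ : ((n : ℝ) - 2) * π / 2 ≤ τ) (hτ' : τ < (n : ℝ) * π / 2) :
    Convex ℝ {lam : Fin n → ℝ | τ < ∑ i, Real.arctan (lam i)} := by
  intro X hX Y hY a b ha hb hab
  simp only [Set.mem_setOf_eq] at hX hY ⊢
  set τ' : ℝ := (τ + min (∑ i, arctan (X i)) (∑ i, arctan (Y i))) / 2 with hτ'def
  have hmin : τ < min (∑ i, arctan (X i)) (∑ i, arctan (Y i)) := lt_min hX hY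
  have hττ' : τ < τ' := by rw [hτ'def]; linarith
  have hX' : τ' < ∑ i, arctan (X i) := by
    have := min_le_left (∑ i, arctan (X i)) (∑ i, arctan (Y i))
    rw [hτ'def]; linarith
  have hY' : τ' < ∑ i, arctan (Y i) := by
    have := min_le_right (∑ i, arctan (X i)) (∑ i, arctan (Y i))
    rw [hτ'def]; linarith
  have hc : ((n : ℝ) - 2) * π / 2 < τ' := lt_of_le_of_lt hτ hττ'
  have hYeq : ∑ i, arctan (X i + (Y i - X i)) = ∑ i, arctan (Y i) := by
    refine Finset.sum_congr rfl fun i _ => ?_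
    ring_nf
  have hseg := my_seg hn X (fun i => Y i - X i) τ' hc hX' (by rw [hYeq]; exact hY')
    b ⟨hb, by linarith⟩
  have heq : ∑ i, arctan (X i + b * (Y i - X i)) = ∑ i, arctan ((a • X + b • Y) i) := by
    refine Finset.sum_congr rfl fun i _ => ?_
    have : X i + b * (Y i - X i) = a * X i + b * Y i := by
      have : a = 1 - b := by linarith
      rw [this]; ring
    rw [this]
    simp [Pi.add_apply, Pi.smul_apply, smul_eq_mul]
  rw [heq] at hseg
  linarith
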